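/- Let V be a real symmetric 2n×2n matrix with V + iΩ_n ≻ 0, let X be a real 2m×2n matrix of rank 2m (2m ≤ 2n), let Y be a real symmetric 2m×2m matrix with Y + iΩ_m − iXΩ_nXᵀ ⪰ 0, and set V_N := XVXᵀ + Y. Then the Hermitian complex matrix (V − iΩ_n)^{-1} − Xᵀ (V_N − iΩ_m)^{-1} X is positive semidefinite. -/

import Mathlib

noncomputable section
open Matrix
open scoped ComplexOrder

/-- The standard `2n × 2n` symplectic form matrix `Ω = [[0, I], [-I, 0]]`. -/
def Om (n : ℕ) : Matrix (Fin n ⊕ Fin n) (Fin n ⊕ Fin n) ℝ :=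
  Matrix.fromBlocks 0 1 (-1) 0

/-- Complexification of a real matrix. -/
def cm {k l : Type*} (A : Matrix k l ℝ) : Matrix k l ℂ := A.map Complex.ofReal

lemma cm_transpose {k l : Type*} (A : Matrix k l ℝ) : (cm A)ᵀ = cm Aᵀ := by
  ext i j; simp [cm]

lemma cm_neg {k l : Type*} (A : Matrix k l ℝ) : cm (-A) = -cm A := by
  ext i j; simp [cm]

lemma cm_add {k l : Type*} (A B : Matrix k l ℝ) : cm (A + B) = cm A + cm B := by
  ext i j; simp [cm]

lemma cm_mul {k l o : Type*} [Fintype l] (A : Matrix k l ℝ) (B : Matrix l o ℝ) :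
    cm (A * B) = cm A * cm B := by
  ext i j; simp [cm, Matrix.mul_apply]

lemma Om_t (k : ℕ) : (Om k)ᵀ = -(Om k) := by
  rw [Om, Matrix.fromBlocks_transpose]; simp [Matrix.fromBlocks_neg]

lemma cm_ct {k l : Type*} (A : Matrix k l ℝ) : ((cm A)ᵀ)ᴴ = cm A := by
  ext i j; simp [cm, Matrix.conjTranspose_apply]

lemma real_inj {m n : ℕ} (X : Matrix (Fin m ⊕ Fin m) (Fin n ⊕ Fin n) ℝ)
    (hXrank : X.rank = 2 * m) (v : Fin m ⊕ Fin m → ℝ) (hv : Xᵀ *ᵥ v = 0) : v = 0 := by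
  classical
  set f := Xᵀ.mulVecLin with hf
  have hrange : Module.finrank ℝ (LinearMap.range f) = 2 * m := by
    rw [← hXrank, ← Matrix.rank_transpose X]; rfl
  have hdom : Module.finrank ℝ (Fin m ⊕ Fin m → ℝ) = 2 * m := by
    simp [Module.finrank_fintype_fun_eq_card, two_mul]
  have hker : Module.finrank ℝ (LinearMap.ker f) = 0 := by
    have := LinearMap.finrank_range_add_finrank_ker f
    omega
  have hkerbot : LinearMap.ker f = ⊥ := Submodule.finrank_eq_zero.mp hker
  have : v ∈ LinearMap.ker f := by show f v = 0; rw [Matrix.mulVecLin_apply]; exact hv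
  simpa [hkerbot] using this

lemma complex_inj {m n : ℕ} (X : Matrix (Fin m ⊕ Fin m) (Fin n ⊕ Fin n) ℝ)
    (hXrank : X.rank = 2 * m) (z : Fin m ⊕ Fin m → ℂ) (hz : (cm X)ᵀ *ᵥ z = 0) : z = 0 := by
  have hre : Xᵀ *ᵥ (fun i => (z i).re) = 0 := by
    funext j
    have hj := congrFun hz j
    simp only [Matrix.mulVec, dotProduct, Matrix.transpose_apply, cm,
      Matrix.map_apply, Pi.zero_apply] at hj ⊢
    have := congrArg Complex.re hj
    simpa [Complex.re_sum, Complex.mul_re] using this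
  have him : Xᵀ *ᵥ (fun i => (z i).im) = 0 := by
    funext j
    have hj := congrFun hz j
    simp only [Matrix.mulVec, dotProduct, Matrix.transpose_apply, cm,
      Matrix.map_apply, Pi.zero_apply] at hj ⊢
    have := congrArg Complex.im hj
    simpa [Complex.im_sum, Complex.mul_im] using this
  have h1 := real_inj X hXrank _ hre
  have h2 := real_inj X hXrank _ him
  funext i
  exact Complex.ext (by simpa using congrFun h1 i) (by simpa using congrFun h2 i)

lemma posDef_ctmm {k l : Type*} [Fintype k] [Fintype l]
    {A : Matrix k k ℂ} (hA : A.PosDef) (B : Matrix k l ℂ)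
    (hB : ∀ x : l → ℂ, B *ᵥ x = 0 → x = 0) : (Bᴴ * A * B).PosDef := by
  refine Matrix.PosDef.of_dotProduct_mulVec_pos
    (Matrix.isHermitian_conjTranspose_mul_mul B hA.1) fun x hx => ?_
  · have hBx : B *ᵥ x ≠ 0 := fun h => hx (hB x h)
    simpa only [star_mulVec, Matrix.dotProduct_mulVec, Matrix.vecMul_vecMul] using
      hA.dotProduct_mulVec_pos hBx

/-- For a faithful covariance matrix `V` (i.e., `V + iΩ_n ≻ 0`), a full-rank channel matrix `X`,
and `Y` symmetric with `Y + iΩ_m - iXΩ_nXᵀ ⪰ 0`, setting `V_N := XVXᵀ + Y`, the Hermitian matrix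
`(V - iΩ_n)⁻¹ - Xᵀ (V_N - iΩ_m)⁻¹ X` is positive semidefinite. -/
theorem inverse_difference_posSemidef (n m : ℕ) (hmn : m ≤ n)
    (V : Matrix (Fin n ⊕ Fin n) (Fin n ⊕ Fin n) ℝ)
    (X : Matrix (Fin m ⊕ Fin m) (Fin n ⊕ Fin n) ℝ)
    (Y : Matrix (Fin m ⊕ Fin m) (Fin m ⊕ Fin m) ℝ)
    (hV : V.IsSymm)
    (hVpd : (cm V + Complex.I • cm (Om n)).PosDef)
    (hXrank : X.rank = 2 * m)
    (hY : Y.IsSymm)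
    (hYcp : (cm Y + Complex.I • cm (Om m)
        - Complex.I • (cm X * cm (Om n) * (cm X)ᵀ)).PosSemidef) :
    ((cm V - Complex.I • cm (Om n))⁻¹
      - (cm X)ᵀ * (cm (X * V * Xᵀ + Y) - Complex.I • cm (Om m))⁻¹ * cm X).PosSemidef := by
  classical
  set Xc := cm X with hXc
  set A := cm V - Complex.I • cm (Om n) with hAdef
  set W := Xc * cm (Om n) * Xcᵀ with hWdef
  set C := cm Y - Complex.I • cm (Om m) + Complex.I • W with hCdef
  set D := cm (X * V * Xᵀ + Y) - Complex.I • cm (Om m) with hDdef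
  have hXH : Xcᵀᴴ = Xc := cm_ct X
  -- A is positive definite
  have hA : A.PosDef := by
    have h := hVpd.transpose
    have e1 : (cm V + Complex.I • cm (Om n))ᵀ = A := by
      rw [Matrix.transpose_add, Matrix.transpose_smul, cm_transpose, cm_transpose, hV.eq,
        Om_t, cm_neg, smul_neg, ← sub_eq_add_neg]
    rwa [e1] at h
  -- C is positive semidefinite
  have hWt : Wᵀ = -W := by
    rw [hWdef, Matrix.transpose_mul, Matrix.transpose_mul, Matrix.transpose_transpose,
      cm_transpose, Om_t, cm_neg]
    simp [Matrix.mul_assoc]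
  have hC : C.PosSemidef := by
    have h := hYcp.transpose
    have e2 : (cm Y + Complex.I • cm (Om m) - Complex.I • W)ᵀ = C := by
      rw [Matrix.transpose_sub, Matrix.transpose_add, Matrix.transpose_smul,
        Matrix.transpose_smul, hWt, cm_transpose, cm_transpose, hY.eq, Om_t, cm_neg,
        smul_neg, smul_neg, sub_neg_eq_add, ← sub_eq_add_neg]
    rwa [e2] at h
  -- D = Xc * A * Xcᵀ + C
  have hD_eq : D = Xc * A * Xcᵀ + C := by
    rw [hDdef, hCdef, hAdef, cm_add, cm_mul, cm_mul, ← cm_transpose, ← hXc, hWdef]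
    simp only [Matrix.mul_sub, Matrix.sub_mul, Matrix.mul_smul, Matrix.smul_mul,
      Matrix.mul_assoc]
    abel
  -- Xc * A * Xcᵀ is positive definite
  have hXAXt : (Xc * A * Xcᵀ).PosDef := by
    have h := posDef_ctmm hA Xcᵀ (fun z hz => complex_inj X hXrank z hz)
    rwa [hXH] at h
  have hD : D.PosDef := by rw [hD_eq]; exact hXAXt.add_posSemidef hC
  haveI : Invertible A := hA.isUnit.invertible
  haveI : Invertible A⁻¹ := hA.inv.isUnit.invertible
  haveI : Invertible D := hD.isUnit.invertible
  have h1 : (D - Xcᵀᴴ * (A⁻¹)⁻¹ * Xcᵀ).PosSemidef := by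
    rw [hXH, Matrix.inv_inv_of_invertible, hD_eq, add_sub_cancel_left]
    exact hC
  have h2 := (Matrix.PosDef.fromBlocks₁₁ Xcᵀ D hA.inv).mpr h1
  have h3 := (Matrix.PosDef.fromBlocks₂₂ A⁻¹ Xcᵀ hD).mp h2
  rwa [hXH] at h3
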